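/- Worpitzky's identity: for all natural numbers n ≥ 1 and all x, x^n = Σ_{m=0}^{n−1} A(n,m) · C(x+m, n), where A(n,m) is the Eulerian number counting permutations of [n] with exactly m descents. -/

import Mathlib

/-- Number of `r`-descents of a permutation `σ` of `[n]` (positions `i < n` with
`σ(i) ≥ σ(i+1) + r`), encoded on `Fin n`. -/
def rDesc (n r : ℕ) (σ : Equiv.Perm (Fin n)) : ℕ :=
  (Finset.univ.filter fun i : Fin n =>
    (if h : (i : ℕ) + 1 < n then ((σ ⟨(i : ℕ) + 1, h⟩ : Fin n) : ℕ) else n) + r ≤ (σ i : ℕ)).card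

/-- Number of `r`-excedances of a permutation `σ` of `[n]` (positions `i ≤ n` with
`σ(i) ≥ i + r`), encoded on `Fin n`. -/
def rExc (n r : ℕ) (σ : Equiv.Perm (Fin n)) : ℕ :=
  (Finset.univ.filter fun i : Fin n => (i : ℕ) + r ≤ (σ i : ℕ)).card

/-- The last value `σ(n)` of a permutation of `[n]` (as an element of `{1,…,n}`). -/
def lastVal (n : ℕ) (σ : Equiv.Perm (Fin n)) : ℕ :=
  if h : 0 < n then ((σ ⟨n - 1, Nat.sub_lt h Nat.one_pos⟩ : Fin n) : ℕ) + 1 else 0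

/-- `Ar r n m k` = number of permutations of `[n]` with exactly `m` `r`-descents
whose last value is `k`. -/
def Ar (r n m k : ℕ) : ℕ :=
  (Finset.univ.filter fun σ : Equiv.Perm (Fin n) => rDesc n r σ = m ∧ lastVal n σ = k).card

/-- `eulerian n m` = number of permutations of `[n]` with exactly `m` descents. -/
def eulerian (n m : ℕ) : ℕ :=
  (Finset.univ.filter fun σ : Equiv.Perm (Fin n) => rDesc n 1 σ = m).card

section WorpitzkyAux
open Finset

lemma card_strictMono_filter (k m : ℕ) :
    (Finset.univ.filter fun h : Fin k → Fin m => StrictMono h).card = m.choose k := by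
  have := Finset.card_bij'
    (i := fun (h : Fin k → Fin m) (_ : h ∈ Finset.univ.filter fun h => StrictMono h) =>
      Finset.image h Finset.univ)
    (j := fun (s : Finset (Fin m)) (hs : s ∈ Finset.powersetCard k Finset.univ) =>
      fun i => s.orderEmbOfFin (Finset.mem_powersetCard.mp hs).2 i)
    (hi := ?_) (hj := ?_) (left_inv := ?_) (right_inv := ?_)
  · rw [this, Finset.card_powersetCard, Finset.card_univ, Fintype.card_fin]
  · intro h hh
    rw [Finset.mem_filter] at hh
    rw [Finset.mem_powersetCard]
    exact ⟨Finset.subset_univ _, by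
      rw [Finset.card_image_of_injective _ hh.2.injective, Finset.card_univ, Fintype.card_fin]⟩
  · intro s hs
    rw [Finset.mem_filter]
    exact ⟨Finset.mem_univ _, (s.orderEmbOfFin _).strictMono⟩
  · intro h hh
    rw [Finset.mem_filter] at hh
    exact (Finset.orderEmbOfFin_unique _ (fun i => Finset.mem_image_of_mem _ (Finset.mem_univ _))
      hh.2).symm
  · intro s hs
    apply Finset.coe_injective
    rw [Finset.coe_image, Finset.coe_univ, Set.image_univ]
    exact Finset.range_orderEmbOfFin _ _

lemma strictMono_of_adj {n : ℕ} {α : Type*} [Preorder α] {f : Fin n → α}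
    (h : ∀ k, ∀ hk : k + 1 < n, f ⟨k, Nat.lt_of_succ_lt hk⟩ < f ⟨k + 1, hk⟩) :
    StrictMono f := by
  rintro ⟨a, ha⟩ ⟨b, hb⟩ hab
  rw [Fin.mk_lt_mk] at hab
  induction b with
  | zero => omega
  | succ k ih =>
    rcases Nat.lt_succ_iff_lt_or_eq.mp hab with h' | h'
    · exact lt_trans (ih (Nat.lt_of_succ_lt hb) h') (h k hb)
    · subst h'; exact h a hb

/-- weak-gap count below `i` -/
def wcnt (st : ℕ → Bool) (i : ℕ) : ℕ := ((Finset.range i).filter fun k => st k = false).card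

lemma wcnt_succ (st : ℕ → Bool) (k : ℕ) :
    wcnt st (k + 1) = wcnt st k + (if st k then 0 else 1) := by
  unfold wcnt
  rw [Finset.range_add_one, Finset.filter_insert]
  by_cases h : st k
  · simp [h]
  · rw [if_pos (by simpa using h), Finset.card_insert_of_notMem (by simp), if_neg h]

lemma wcnt_mono (st : ℕ → Bool) {i j : ℕ} (h : i ≤ j) : wcnt st i ≤ wcnt st j :=
  Finset.card_le_card (Finset.filter_subset_filter _ (by simpa using Finset.range_subset_range.mpr h))

/-- The adjacency condition: weakly increasing, strict at gaps `k` with `st k = true`. -/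
def AdjC (n x : ℕ) (st : ℕ → Bool) (g : Fin n → Fin x) : Prop :=
  ∀ k : Fin n, ∀ hk : (k : ℕ) + 1 < n,
    (g k : ℕ) + (if st k then 1 else 0) ≤ g ⟨(k : ℕ) + 1, hk⟩

instance (n x : ℕ) (st : ℕ → Bool) : DecidablePred (AdjC n x st) := by
  unfold AdjC; infer_instance

lemma adjC_nat {n x : ℕ} {st : ℕ → Bool} {g : Fin n → Fin x} (hg : AdjC n x st g) :
    ∀ k, ∀ hk : k + 1 < n,
      (g ⟨k, Nat.lt_of_succ_lt hk⟩ : ℕ) + (if st k then 1 else 0) ≤ g ⟨k + 1, hk⟩ :=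
  fun k hk => hg ⟨k, Nat.lt_of_succ_lt hk⟩ hk

lemma card_adj (n x : ℕ) (st : ℕ → Bool) :
    (Finset.univ.filter (AdjC n x st)).card = Nat.choose (x + wcnt st (n - 1)) n := by
  set w := wcnt st (n - 1) with hw
  have key : ∀ (h : Fin n → Fin (x + w)), StrictMono h →
      ∀ k, ∀ hk : k < n, wcnt st k ≤ (h ⟨k, hk⟩ : ℕ) ∧ (h ⟨k, hk⟩ : ℕ) < x + wcnt st k := by
    intro h hsm
    have ha : ∀ k, ∀ hk : k < n, wcnt st k ≤ (h ⟨k, hk⟩ : ℕ) := by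
      intro k
      induction k with
      | zero => intro hk; simp [wcnt]
      | succ k ih =>
        intro hk
        have h1 := ih (Nat.lt_of_succ_lt hk)
        have h2 : (h ⟨k, Nat.lt_of_succ_lt hk⟩ : ℕ) < h ⟨k + 1, hk⟩ :=
          hsm (by rw [Fin.mk_lt_mk]; omega)
        have h3 := wcnt_succ st k
        by_cases hst : st k <;> simp [hst] at h3 <;> omega
    have hb : ∀ j, ∀ hj : j < n, ∀ i, ∀ hij : i ≤ j,
        (h ⟨i, lt_of_le_of_lt hij hj⟩ : ℕ) + wcnt st j ≤ (h ⟨j, hj⟩ : ℕ) + wcnt st i := by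
      intro j
      induction j with
      | zero => intro hj i hij; interval_cases i; omega
      | succ j ih =>
        intro hj i hij
        rcases Nat.lt_succ_iff_lt_or_eq.mp (Nat.lt_succ_of_le hij) with h' | h'
        · have h1 := ih (Nat.lt_of_succ_lt hj) i (Nat.lt_succ_iff.mp h')
          have h2 : (h ⟨j, Nat.lt_of_succ_lt hj⟩ : ℕ) < h ⟨j + 1, hj⟩ :=
            hsm (by rw [Fin.mk_lt_mk]; omega)
          have h3 := wcnt_succ st j
          have h6 : (h ⟨i, lt_of_le_of_lt (Nat.lt_succ_iff.mp h') (Nat.lt_of_succ_lt hj)⟩ : ℕ)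
              = (h ⟨i, lt_of_le_of_lt hij hj⟩ : ℕ) := rfl
          by_cases hst : st j <;> simp [hst] at h3 <;> omega
        · subst h'
          have h6 : (h ⟨j + 1, lt_of_le_of_lt hij hj⟩ : ℕ) = (h ⟨j + 1, hj⟩ : ℕ) := rfl
          omega
    intro k hk
    refine ⟨ha k hk, ?_⟩
    have h4 := hb (n - 1) (by omega) k (by omega)
    have h5 : (h ⟨n - 1, by omega⟩ : ℕ) < x + w := (h _).isLt
    have h6 : (h ⟨k, by omega⟩ : ℕ) = (h ⟨k, hk⟩ : ℕ) := rfl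
    omega
  have hn1 : ∀ i : Fin n, (i : ℕ) ≤ n - 1 := fun i => by have := i.isLt; omega
  have main := Finset.card_bij'
    (i := fun (g : Fin n → Fin x) (_ : g ∈ Finset.univ.filter (AdjC n x st)) =>
      (fun i : Fin n => (⟨(g i : ℕ) + wcnt st i, by
        have h1 := (g i).isLt
        have h2 := wcnt_mono st (hn1 i)
        omega⟩ : Fin (x + w))))
    (j := fun (h : Fin n → Fin (x + w)) (hh : h ∈ Finset.univ.filter fun h => StrictMono h) =>
      (fun i : Fin n => (⟨(h i : ℕ) - wcnt st i, by
        have hsm : StrictMono h := (Finset.mem_filter.mp hh).2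
        have h1 := key h hsm i i.isLt
        have h2 : h ⟨(i : ℕ), i.isLt⟩ = h i := rfl
        omega⟩ : Fin x)))
    (hi := ?_) (hj := ?_) (left_inv := ?_) (right_inv := ?_)
  · rw [main, card_strictMono_filter]
  · intro g hg
    rw [Finset.mem_filter] at hg ⊢
    refine ⟨Finset.mem_univ _, strictMono_of_adj ?_⟩
    intro k hk
    have h1 := adjC_nat hg.2 k hk
    have h3 := wcnt_succ st k
    rw [Fin.mk_lt_mk]
    simp only []
    by_cases hst : st k <;> simp [hst] at h1 h3 ⊢ <;> try omega
  · intro h hh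
    rw [Finset.mem_filter] at hh ⊢
    refine ⟨Finset.mem_univ _, ?_⟩
    intro k hk
    have hsm : StrictMono h := hh.2
    have h1 := key h hsm k k.isLt
    have h2 := key h hsm ((k : ℕ) + 1) hk
    have h4 : h ⟨(k : ℕ), k.isLt⟩ = h k := rfl
    have h5 : (h k : ℕ) < h ⟨(k : ℕ) + 1, hk⟩ := hsm (by rw [Fin.lt_def]; exact Nat.lt_succ_self _)
    have h3 := wcnt_succ st k
    simp only []
    by_cases hst : st k <;> simp [hst] at h3 ⊢ <;> omega
  · intro g hg
    funext i
    apply Fin.ext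
    simp
  · intro h hh
    funext i
    apply Fin.ext
    rw [Finset.mem_filter] at hh
    have h1 := key h hh.2 i i.isLt
    have h2 : h ⟨(i : ℕ), i.isLt⟩ = h i := rfl
    simp only []
    omega

lemma monotone_of_adj {n : ℕ} {α : Type*} [Preorder α] {f : Fin n → α}
    (h : ∀ k, ∀ hk : k + 1 < n, f ⟨k, Nat.lt_of_succ_lt hk⟩ ≤ f ⟨k + 1, hk⟩) :
    Monotone f := by
  rintro ⟨a, ha⟩ ⟨b, hb⟩ hab
  rw [Fin.mk_le_mk] at hab
  induction b with
  | zero =>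
    have : a = 0 := by omega
    subst this; exact le_refl _
  | succ k ih =>
    rcases Nat.lt_succ_iff_lt_or_eq.mp (Nat.lt_succ_of_le hab) with h' | h'
    · exact le_trans (ih (Nat.lt_of_succ_lt hb) (Nat.lt_succ_iff.mp h')) (h k hb)
    · subst h'; exact le_refl _

/-- strictness pattern of a permutation: strict increase forced at descents. -/
def stOf (n : ℕ) (σ : Equiv.Perm (Fin n)) (k : ℕ) : Bool :=
  if hk : k + 1 < n then
    decide ((σ ⟨k + 1, hk⟩ : ℕ) < (σ ⟨k, Nat.lt_of_succ_lt hk⟩ : ℕ))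
  else false

lemma sigma_adj_step {n x : ℕ} {σ : Equiv.Perm (Fin n)} {g : Fin n → Fin x}
    (hg : AdjC n x (stOf n σ) g) (b : ℕ) (hb : b + 1 < n)
    (heq : g ⟨b, Nat.lt_of_succ_lt hb⟩ = g ⟨b + 1, hb⟩) :
    σ ⟨b, Nat.lt_of_succ_lt hb⟩ < σ ⟨b + 1, hb⟩ := by
  have h1 := hg ⟨b, Nat.lt_of_succ_lt hb⟩ hb
  simp only [stOf, dif_pos hb] at h1
  have hne : σ ⟨b, Nat.lt_of_succ_lt hb⟩ ≠ σ ⟨b + 1, hb⟩ := by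
    intro hc
    have := σ.injective hc
    simp [Fin.mk.injEq] at this
  rw [Fin.lt_def]
  rcases lt_or_ge ((σ ⟨b + 1, hb⟩ : ℕ)) ((σ ⟨b, Nat.lt_of_succ_lt hb⟩ : ℕ)) with hlt | hle
  · rw [if_pos (by simpa using hlt)] at h1
    have : (g ⟨b, Nat.lt_of_succ_lt hb⟩ : ℕ) = (g ⟨b + 1, hb⟩ : ℕ) := by rw [heq]
    omega
  · rcases lt_or_eq_of_le hle with h | h
    · exact h
    · exact absurd (Fin.ext h) hne

lemma sigma_chain {n x : ℕ} {σ : Equiv.Perm (Fin n)} {g : Fin n → Fin x}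
    (hg : AdjC n x (stOf n σ) g) (hmono : Monotone g) :
    ∀ b, ∀ hb : b < n, ∀ a, ∀ ha : a < b,
      g ⟨a, lt_trans ha hb⟩ = g ⟨b, hb⟩ → σ ⟨a, lt_trans ha hb⟩ < σ ⟨b, hb⟩ := by
  intro b
  induction b with
  | zero => omega
  | succ k ih =>
    intro hb a ha heq
    rcases Nat.lt_succ_iff_lt_or_eq.mp ha with h' | h'
    · have hak : (⟨a, lt_trans ha hb⟩ : Fin n) ≤ ⟨k, Nat.lt_of_succ_lt hb⟩ := by
        rw [Fin.mk_le_mk]; omega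
      have hk1 : (⟨k, Nat.lt_of_succ_lt hb⟩ : Fin n) ≤ ⟨k + 1, hb⟩ := by
        rw [Fin.mk_le_mk]; omega
      have e1 : g ⟨a, lt_trans ha hb⟩ = g ⟨k, Nat.lt_of_succ_lt hb⟩ :=
        le_antisymm (hmono hak) (heq ▸ hmono hk1)
      have e2 : g ⟨k, Nat.lt_of_succ_lt hb⟩ = g ⟨k + 1, hb⟩ := by
        rw [← e1, heq]
      exact lt_trans (ih (Nat.lt_of_succ_lt hb) a h' e1) (sigma_adj_step hg k hb e2)
    · subst h'
      exact sigma_adj_step hg a hb heq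

lemma fiber_card (n x : ℕ) (σ : Equiv.Perm (Fin n)) :
    (Finset.univ.filter fun f : Fin n → Fin x => Tuple.sort f = σ).card
      = (Finset.univ.filter (AdjC n x (stOf n σ))).card := by
  apply Finset.card_bij'
    (i := fun (f : Fin n → Fin x) (_ : f ∈ Finset.univ.filter fun f => Tuple.sort f = σ) =>
      fun i => f (σ i))
    (j := fun (g : Fin n → Fin x) (_ : g ∈ Finset.univ.filter (AdjC n x (stOf n σ))) =>
      fun i => g (σ.symm i))
  · intro f hf
    rw [Finset.mem_filter] at hf
    have hs : σ = Tuple.sort f := hf.2.symm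
    rw [Tuple.eq_sort_iff] at hs
    rw [Finset.mem_filter]
    refine ⟨Finset.mem_univ _, ?_⟩
    intro k hk
    have hlt : (k : Fin n) < ⟨(k : ℕ) + 1, hk⟩ := by rw [Fin.lt_def]; exact Nat.lt_succ_self _
    have hle := hs.1 (le_of_lt hlt)
    simp only [Function.comp_apply] at hle
    by_cases hst : stOf n σ (k : ℕ)
    · rw [if_pos hst]
      simp only [stOf, dif_pos hk] at hst
      rcases lt_or_eq_of_le hle with h | h
      · exact h
      · exfalso
        have := hs.2 k ⟨(k : ℕ) + 1, hk⟩ hlt h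
        rw [Fin.lt_def] at this
        simp only [decide_eq_true_eq] at hst
        have hbr : (σ ⟨(k : ℕ), Nat.lt_of_succ_lt hk⟩ : ℕ) = (σ k : ℕ) := rfl
        omega
    · rw [if_neg hst]
      simpa using hle
  · intro g hg
    rw [Finset.mem_filter] at hg
    rw [Finset.mem_filter]
    refine ⟨Finset.mem_univ _, ?_⟩
    have hcomp : (fun i => g (σ.symm i)) ∘ ⇑σ = g := by
      funext i; simp
    symm
    rw [Tuple.eq_sort_iff, hcomp]
    have hmono : Monotone g := by
      apply monotone_of_adj
      intro k hk
      have h1 := hg.2 ⟨k, Nat.lt_of_succ_lt hk⟩ hk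
      rw [Fin.le_def]
      by_cases hst : stOf n σ k <;> simp [hst] at h1 <;> omega
    refine ⟨hmono, ?_⟩
    rintro ⟨a, ha⟩ ⟨b, hb⟩ hab heq
    rw [Fin.mk_lt_mk] at hab
    simp only [Equiv.symm_apply_apply] at heq
    exact sigma_chain hg.2 hmono b hb a hab heq
  · intro f hf
    funext i; simp
  · intro g hg
    funext i; simp

lemma rDesc_eq (n : ℕ) (σ : Equiv.Perm (Fin n)) :
    rDesc n 1 σ = ((Finset.range (n - 1)).filter fun k => stOf n σ k = true).card := by
  apply Finset.card_bij'
    (i := fun (i : Fin n) (_ : i ∈ Finset.univ.filter fun i : Fin n =>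
      (if h : (i : ℕ) + 1 < n then ((σ ⟨(i : ℕ) + 1, h⟩ : Fin n) : ℕ) else n) + 1 ≤ (σ i : ℕ)) =>
      (i : ℕ))
    (j := fun (k : ℕ) (hk : k ∈ (Finset.range (n - 1)).filter fun k => stOf n σ k = true) =>
      (⟨k, by have := Finset.mem_range.mp (Finset.mem_filter.mp hk).1; omega⟩ : Fin n))
    (hi := ?_) (hj := ?_) (left_inv := ?_) (right_inv := ?_)
  · intro i hi
    rw [Finset.mem_filter] at hi
    have h2 := hi.2
    by_cases h : (i : ℕ) + 1 < n
    · rw [dif_pos h] at h2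
      simp only [Finset.mem_filter, Finset.mem_range]
      refine ⟨by omega, ?_⟩
      simp only [stOf, dif_pos h, decide_eq_true_eq]
      have hbr : (σ ⟨(i : ℕ), Nat.lt_of_succ_lt h⟩ : ℕ) = (σ i : ℕ) := rfl
      omega
    · rw [dif_neg h] at h2
      have := (σ i).isLt
      omega
  · intro k hk
    have hk' := hk
    rw [Finset.mem_filter] at hk'
    have hkr := Finset.mem_range.mp hk'.1
    have hst := hk'.2
    have h : k + 1 < n := by omega
    simp only [stOf, dif_pos h, decide_eq_true_eq] at hst
    rw [Finset.mem_filter]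
    refine ⟨Finset.mem_univ _, ?_⟩
    rw [dif_pos h]
    exact hst
  · intro i hi
    exact Fin.eta _ _
  · intro k hk
    rfl

lemma rDesc_add_wcnt (n : ℕ) (σ : Equiv.Perm (Fin n)) :
    rDesc n 1 σ + wcnt (stOf n σ) (n - 1) = n - 1 := by
  rw [rDesc_eq]
  unfold wcnt
  simpa using Finset.card_filter_add_card_filter_not
    (s := Finset.range (n - 1)) (p := fun k => stOf n σ k = true)

lemma rDesc_flip (n : ℕ) (σ : Equiv.Perm (Fin n)) :
    rDesc n 1 (σ.trans Fin.revPerm) = n - 1 - rDesc n 1 σ := by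
  have hpart := rDesc_add_wcnt n σ
  rw [rDesc_eq, rDesc_eq] at *
  have : ((Finset.range (n - 1)).filter fun k => stOf n (σ.trans Fin.revPerm) k = true)
      = ((Finset.range (n - 1)).filter fun k => stOf n σ k = false) := by
    apply Finset.filter_congr
    intro k hk
    have h : k + 1 < n := by have := Finset.mem_range.mp hk; omega
    have hne : (σ ⟨k, Nat.lt_of_succ_lt h⟩ : ℕ) ≠ (σ ⟨k + 1, h⟩ : ℕ) := by
      intro hc
      have := σ.injective (Fin.ext hc)
      simp [Fin.mk.injEq] at this
    have ha := (σ ⟨k, Nat.lt_of_succ_lt h⟩).isLt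
    have hb := (σ ⟨k + 1, h⟩).isLt
    simp only [stOf, dif_pos h, Equiv.trans_apply, Fin.revPerm_apply, Fin.val_rev,
      decide_eq_true_eq, decide_eq_false_iff_not]
    constructor <;> intro hh <;> omega
  rw [this]
  unfold wcnt at hpart
  omega

lemma eulerian_symm (n m : ℕ) (hm : m < n) :
    eulerian n (n - 1 - m) = eulerian n m := by
  unfold eulerian
  apply Finset.card_nbij' (i := fun σ => σ.trans Fin.revPerm) (j := fun σ => σ.trans Fin.revPerm)
  · intro σ hσ
    rw [Finset.mem_coe, Finset.mem_filter] at hσ ⊢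
    refine ⟨Finset.mem_univ _, ?_⟩
    rw [rDesc_flip, hσ.2]
    omega
  · intro σ hσ
    rw [Finset.mem_coe, Finset.mem_filter] at hσ ⊢
    refine ⟨Finset.mem_univ _, ?_⟩
    rw [rDesc_flip, hσ.2]
  · intro σ hσ
    ext i
    simp [Fin.rev_rev]
  · intro σ hσ
    ext i
    simp [Fin.rev_rev]

end WorpitzkyAux

/-- Worpitzky's identity: `x^n = Σ_{m=0}^{n-1} A(n,m) C(x+m,n)` for `n ≥ 1`. -/
theorem stmt15 (n : ℕ) (hn : 1 ≤ n) (x : ℕ) :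
    x ^ n = ∑ m ∈ Finset.range n, eulerian n m * Nat.choose (x + m) n := by
  have h0 : x ^ n = (Finset.univ : Finset (Fin n → Fin x)).card := by
    rw [Finset.card_univ, Fintype.card_fun, Fintype.card_fin, Fintype.card_fin]
  rw [h0, Finset.card_eq_sum_card_fiberwise
    (f := fun f : Fin n → Fin x => Tuple.sort f) (t := Finset.univ) (fun _ _ => Finset.mem_univ _)]
  have h1 : ∀ σ : Equiv.Perm (Fin n),
      (Finset.univ.filter fun f : Fin n → Fin x => Tuple.sort f = σ).card
        = Nat.choose (x + (n - 1 - rDesc n 1 σ)) n := by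
    intro σ
    rw [fiber_card, card_adj]
    congr 2
    have := rDesc_add_wcnt n σ
    omega
  rw [Finset.sum_congr rfl fun σ _ => h1 σ]
  have hmap : ∀ σ ∈ (Finset.univ : Finset (Equiv.Perm (Fin n))),
      rDesc n 1 σ ∈ Finset.range n := by
    intro σ _
    rw [Finset.mem_range]
    have := rDesc_add_wcnt n σ
    omega
  rw [← Finset.sum_fiberwise_of_maps_to hmap
    (fun σ : Equiv.Perm (Fin n) => Nat.choose (x + (n - 1 - rDesc n 1 σ)) n)]
  have step1 : ∀ m ∈ Finset.range n,
      (∑ σ ∈ Finset.univ.filter fun σ : Equiv.Perm (Fin n) => rDesc n 1 σ = m,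
        Nat.choose (x + (n - 1 - rDesc n 1 σ)) n)
      = eulerian n (n - 1 - m) * Nat.choose (x + (n - 1 - m)) n := by
    intro m hm
    rw [Finset.sum_congr rfl (fun σ hσ => by rw [(Finset.mem_filter.mp hσ).2]),
      Finset.sum_const, smul_eq_mul, eulerian_symm n m (Finset.mem_range.mp hm)]
    rfl
  rw [Finset.sum_congr rfl step1]
  exact Finset.sum_range_reflect (fun j => eulerian n j * Nat.choose (x + j) n) n
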